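/- Let V = MvPolynomial (Fin 4) ℂ ⊗_ℂ Cl as above, with L_{μν} = a_μ†a_ν − a_μa_ν†, Σ_{μν} = (1/2)γ_μγ_ν, J_{μν} = −i(L_{μν} + Σ_{μν}), and H = (1/2)Σ_{μ=1}^4 {a_μ†, a_μ}. Define 𝒦₁ = (1/2)(a₁†a₁ + a₂†a₂ − a₃†a₃ − a₄†a₄), 𝒦₂ = 2( L₁₂Σ₁₂ + L₁₃Σ₁₃ + L₁₄Σ₁₄ + L₂₃Σ₂₃ + L₂₄Σ₂₄ + L₃₄Σ₃₄ − 3/4 ), r = iγ₁γ₂, ℛ = −γ₁γ₂γ₃γ₄. Then each of 𝒦₁, 𝒦₂, r, ℛ commutes with each of H, J₁₂, and J₃₄. -/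

import Mathlib

noncomputable section

open scoped TensorProduct

/-- The polynomial factor `ℂ[x₁,…,x₄]`. -/
abbrev Mpoly : Type := MvPolynomial (Fin 4) ℂ

/-- The standard quadratic form `Q(v) = Σ_μ v_μ²` on `ℂ⁴`. -/
def Qform : QuadraticForm ℂ (Fin 4 → ℂ) :=
  QuadraticMap.weightedSumSquares ℂ (fun _ : Fin 4 => (1 : ℂ))

/-- The Clifford algebra of `ℂ⁴`. -/
abbrev Cl : Type := CliffordAlgebra Qform

/-- The Clifford generators `γ_μ = ι(e_μ)`. -/
def γc (μ : Fin 4) : Cl := CliffordAlgebra.ι Qform (Pi.single μ 1)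

/-- The representation space `V = ℂ[x₁,…,x₄] ⊗ Cl`. -/
abbrev V : Type := Mpoly ⊗[ℂ] Cl

/-- `a_μ = ∂/∂x_μ` acting on the first factor of `V`. -/
def aop (μ : Fin 4) : Module.End ℂ V :=
  LinearMap.rTensor Cl (MvPolynomial.pderiv μ).toLinearMap

/-- `a_μ† = x_μ·` acting on the first factor of `V`. -/
def adop (μ : Fin 4) : Module.End ℂ V :=
  LinearMap.rTensor Cl (LinearMap.mulLeft ℂ (MvPolynomial.X μ : Mpoly))

/-- `γ_μ` acting by left multiplication on the second factor of `V`. -/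
def gop (μ : Fin 4) : Module.End ℂ V :=
  LinearMap.lTensor Mpoly (LinearMap.mulLeft ℂ (γc μ))

/-- `L_{μν} = a_μ†a_ν - a_μa_ν†`. -/
def Lop (μ ν : Fin 4) : Module.End ℂ V := adop μ * aop ν - aop μ * adop ν

/-- `Σ_{μν} = (1/2)γ_μγ_ν`. -/
def Sop (μ ν : Fin 4) : Module.End ℂ V := (2⁻¹ : ℂ) • (gop μ * gop ν)

/-- The total angular momentum `J_{μν} = -i(L_{μν} + Σ_{μν})` for `μ ≠ ν`, with the
convention `J_{μμ} = 0`. -/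
def Jop (μ ν : Fin 4) : Module.End ℂ V :=
  if μ = ν then 0 else -(Complex.I • (Lop μ ν + Sop μ ν))

/-- The Hamiltonian `H = (1/2)Σ_μ {a_μ†, a_μ}`. -/
def Hop : Module.End ℂ V :=
  (2⁻¹ : ℂ) • ∑ μ : Fin 4, (adop μ * aop μ + aop μ * adop μ)

open MvPolynomial LinearMap

-- γ relations in Cl
lemma gamma_sq (i : Fin 4) : γc i * γc i = 1 := by
  rw [γc, CliffordAlgebra.ι_sq_scalar]
  have : Qform (Pi.single i 1) = 1 := by
    simp [Qform, QuadraticMap.weightedSumSquares_apply, Pi.single_apply]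
  rw [this, map_one]

lemma gamma_anticomm {i j : Fin 4} (h : i ≠ j) : γc i * γc j = -(γc j * γc i) := by
  have horth : Qform.IsOrtho (Pi.single i 1) (Pi.single j 1) := by
    rw [QuadraticMap.isOrtho_def]
    simp [Qform, QuadraticMap.weightedSumSquares_apply, Pi.single_apply, Pi.add_apply,
      Finset.sum_add_distrib, mul_add, add_mul, Finset.sum_ite_eq', h, h.symm,
      ite_and]
  have := CliffordAlgebra.ι_mul_ι_add_swap_of_isOrtho horth
  rw [γc, γc]
  exact eq_neg_of_add_eq_zero_left this

-- lifting lemmas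
lemma gg (i j : Fin 4) : gop i * gop j =
    LinearMap.lTensor Mpoly (LinearMap.mulLeft ℂ (γc i * γc j)) := by
  rw [gop, gop, Module.End.mul_eq_comp, ← lTensor_comp, mulLeft_mul]

lemma gop_sq (i : Fin 4) : gop i * gop i = 1 := by
  rw [gg, gamma_sq]
  simp only [mulLeft_one, lTensor_id]
  rfl

lemma gop_swap_neg {i j : Fin 4} (h : j < i) : gop i * gop j = -(gop j * gop i) := by
  rw [gg, gg, gamma_anticomm (by exact fun hc => absurd hc (by rintro rfl; exact lt_irrefl _ h))]
  have h1 : mulLeft ℂ (-(γc j * γc i)) = -mulLeft ℂ (γc j * γc i) := by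
    ext x; simp [mul_assoc]
  rw [h1]
  have h2 : lTensor Mpoly (-(mulLeft ℂ (γc j * γc i))) = -(lTensor Mpoly (mulLeft ℂ (γc j * γc i))) := by
    ext x; simp [mul_assoc]
  rw [h2, ← gg]

-- partial derivatives commute
lemma pd_comm (i j : Fin 4) (p : Mpoly) :
    pderiv i (pderiv j p) = pderiv j (pderiv i p) := by
  induction p using MvPolynomial.induction_on with
  | C a => simp [pderiv_C]
  | add p q hp hq => simp [map_add, hp, hq]
  | mul_X p k hp =>
      simp only [pderiv_mul, map_add, pderiv_mul, hp]
      classical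
      by_cases hik : k = i <;> by_cases hjk : k = j <;>
        simp [pderiv_X, hik, hjk, pderiv_C, Pi.single_apply, apply_ite (pderiv i), apply_ite (pderiv j), pderiv_one] <;> ring

lemma aop_comm (i j : Fin 4) : aop i * aop j = aop j * aop i := by
  rw [aop, aop, Module.End.mul_eq_comp, Module.End.mul_eq_comp, ← rTensor_comp, ← rTensor_comp]
  refine congrArg (rTensor Cl) ?_
  exact LinearMap.ext fun p => pd_comm i j p

lemma adop_comm (i j : Fin 4) : adop i * adop j = adop j * adop i := by
  rw [adop, adop, Module.End.mul_eq_comp, Module.End.mul_eq_comp, ← rTensor_comp, ← rTensor_comp,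
    ← mulLeft_mul, ← mulLeft_mul, mul_comm (X i)]

lemma aop_adop (i j : Fin 4) :
    aop i * adop j = adop j * aop i + (if i = j then 1 else 0) := by
  by_cases h : i = j
  · subst h
    rw [if_pos rfl]
    rw [aop, adop, Module.End.mul_eq_comp, Module.End.mul_eq_comp, ← rTensor_comp, ← rTensor_comp]
    have h1 : (1 : Module.End ℂ V) = rTensor Cl (LinearMap.id : Mpoly →ₗ[ℂ] Mpoly) := (rTensor_id _ _).symm
    rw [h1, ← rTensor_add]
    congr 1
    refine LinearMap.ext fun p => ?_
    simp [pderiv_mul, pderiv_X_self, add_comm]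
  · simp only [if_neg h, add_zero]
    rw [aop, adop, Module.End.mul_eq_comp, Module.End.mul_eq_comp, ← rTensor_comp, ← rTensor_comp]
    congr 1
    refine LinearMap.ext fun p => ?_
    simp [pderiv_mul, pderiv_X_of_ne (fun hc => h hc.symm)]

lemma gop_aop (i j : Fin 4) : gop i * aop j = aop j * gop i := by
  rw [gop, aop, Module.End.mul_eq_comp, Module.End.mul_eq_comp, lTensor_comp_rTensor, rTensor_comp_lTensor]

lemma gop_adop (i j : Fin 4) : gop i * adop j = adop j * gop i := by
  rw [gop, adop, Module.End.mul_eq_comp, Module.End.mul_eq_comp, lTensor_comp_rTensor, rTensor_comp_lTensor]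

lemma aop_adop' (i j : Fin 4) (x : Module.End ℂ V) :
    aop i * (adop j * x) = adop j * (aop i * x) + (if i = j then x else 0) := by
  rw [← mul_assoc, aop_adop, add_mul, mul_assoc]
  congr 1
  split_ifs <;> simp

lemma aop_swap {i j : Fin 4} (h : j < i) : aop i * aop j = aop j * aop i := aop_comm i j

lemma aop_swap' {i j : Fin 4} (h : j < i) (x : Module.End ℂ V) :
    aop i * (aop j * x) = aop j * (aop i * x) := by
  rw [← mul_assoc, aop_comm, mul_assoc]

lemma adop_swap {i j : Fin 4} (h : j < i) : adop i * adop j = adop j * adop i := adop_comm i j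

lemma adop_swap' {i j : Fin 4} (h : j < i) (x : Module.End ℂ V) :
    adop i * (adop j * x) = adop j * (adop i * x) := by
  rw [← mul_assoc, adop_comm, mul_assoc]

lemma gop_sq' (i : Fin 4) (x : Module.End ℂ V) : gop i * (gop i * x) = x := by
  rw [← mul_assoc, gop_sq, one_mul]

lemma end_neg_eq_smul (x : Module.End ℂ V) : -x = (-1 : ℂ) • x := (neg_one_smul ℂ x).symm

lemma end_sub_eq (a b : Module.End ℂ V) : a - b = a + (-1 : ℂ) • b :=
  (sub_eq_add_neg a b).trans (by rw [end_neg_eq_smul])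

lemma gop_swap {i j : Fin 4} (h : j < i) :
    gop i * gop j = (-1 : ℂ) • (gop j * gop i) := by
  rw [gop_swap_neg h, end_neg_eq_smul]

lemma gop_swap' {i j : Fin 4} (h : j < i) (x : Module.End ℂ V) :
    gop i * (gop j * x) = (-1 : ℂ) • (gop j * (gop i * x)) := by
  rw [← mul_assoc, gop_swap h, smul_mul_assoc, mul_assoc]

lemma gop_aop' (i j : Fin 4) (x : Module.End ℂ V) :
    gop i * (aop j * x) = aop j * (gop i * x) := by
  rw [← mul_assoc, gop_aop, mul_assoc]

lemma gop_adop' (i j : Fin 4) (x : Module.End ℂ V) :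
    gop i * (adop j * x) = adop j * (gop i * x) := by
  rw [← mul_assoc, gop_adop, mul_assoc]

lemma Jop01 : Jop 0 1 = -(Complex.I • (Lop 0 1 + Sop 0 1)) := by
  rw [Jop, if_neg (by decide)]

lemma Jop23 : Jop 2 3 = -(Complex.I • (Lop 2 3 + Sop 2 3)) := by
  rw [Jop, if_neg (by decide)]

set_option maxHeartbeats 1600000 in
lemma comm1 : ((2⁻¹ : ℂ) • (adop 0 * aop 0 + adop 1 * aop 1 - adop 2 * aop 2 - adop 3 * aop 3)) * (Hop) = (Hop) * ((2⁻¹ : ℂ) • (adop 0 * aop 0 + adop 1 * aop 1 - adop 2 * aop 2 - adop 3 * aop 3)) := by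
  simp only [Hop, Jop01, Jop23, Lop, Sop, Fin.sum_univ_four, Fin.isValue, Fin.reduceEq, Fin.reduceLT,
      reduceIte, ite_true, ite_false,
      end_sub_eq, end_neg_eq_smul,
      mul_add, add_mul,
      smul_add, smul_smul, smul_mul_assoc, mul_smul_comm,
      mul_assoc, mul_one, one_mul, mul_zero, zero_mul, add_zero, zero_add, smul_zero,
      zero_smul,
      aop_adop, aop_adop', aop_swap, aop_swap', adop_swap, adop_swap',
      gop_sq, gop_sq', gop_swap, gop_swap', gop_aop, gop_aop', gop_adop, gop_adop']
  module

set_option maxHeartbeats 1600000 in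
lemma comm2 : ((2⁻¹ : ℂ) • (adop 0 * aop 0 + adop 1 * aop 1 - adop 2 * aop 2 - adop 3 * aop 3)) * (Jop 0 1) = (Jop 0 1) * ((2⁻¹ : ℂ) • (adop 0 * aop 0 + adop 1 * aop 1 - adop 2 * aop 2 - adop 3 * aop 3)) := by
  simp only [Hop, Jop01, Jop23, Lop, Sop, Fin.sum_univ_four, Fin.isValue, Fin.reduceEq, Fin.reduceLT,
      reduceIte, ite_true, ite_false,
      end_sub_eq, end_neg_eq_smul,
      mul_add, add_mul,
      smul_add, smul_smul, smul_mul_assoc, mul_smul_comm,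
      mul_assoc, mul_one, one_mul, mul_zero, zero_mul, add_zero, zero_add, smul_zero,
      zero_smul,
      aop_adop, aop_adop', aop_swap, aop_swap', adop_swap, adop_swap',
      gop_sq, gop_sq', gop_swap, gop_swap', gop_aop, gop_aop', gop_adop, gop_adop']
  module

set_option maxHeartbeats 1600000 in
lemma comm3 : ((2⁻¹ : ℂ) • (adop 0 * aop 0 + adop 1 * aop 1 - adop 2 * aop 2 - adop 3 * aop 3)) * (Jop 2 3) = (Jop 2 3) * ((2⁻¹ : ℂ) • (adop 0 * aop 0 + adop 1 * aop 1 - adop 2 * aop 2 - adop 3 * aop 3)) := by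
  simp only [Hop, Jop01, Jop23, Lop, Sop, Fin.sum_univ_four, Fin.isValue, Fin.reduceEq, Fin.reduceLT,
      reduceIte, ite_true, ite_false,
      end_sub_eq, end_neg_eq_smul,
      mul_add, add_mul,
      smul_add, smul_smul, smul_mul_assoc, mul_smul_comm,
      mul_assoc, mul_one, one_mul, mul_zero, zero_mul, add_zero, zero_add, smul_zero,
      zero_smul,
      aop_adop, aop_adop', aop_swap, aop_swap', adop_swap, adop_swap',
      gop_sq, gop_sq', gop_swap, gop_swap', gop_aop, gop_aop', gop_adop, gop_adop']
  module

set_option maxHeartbeats 1600000 in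
lemma comm4 : ((2 : ℂ) • (Lop 0 1 * Sop 0 1 + Lop 0 2 * Sop 0 2 + Lop 0 3 * Sop 0 3
        + Lop 1 2 * Sop 1 2 + Lop 1 3 * Sop 1 3 + Lop 2 3 * Sop 2 3
        - (3 / 4 : ℂ) • (1 : Module.End ℂ V))) * (Hop) = (Hop) * ((2 : ℂ) • (Lop 0 1 * Sop 0 1 + Lop 0 2 * Sop 0 2 + Lop 0 3 * Sop 0 3
        + Lop 1 2 * Sop 1 2 + Lop 1 3 * Sop 1 3 + Lop 2 3 * Sop 2 3
        - (3 / 4 : ℂ) • (1 : Module.End ℂ V))) := by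
  simp only [Hop, Jop01, Jop23, Lop, Sop, Fin.sum_univ_four, Fin.isValue, Fin.reduceEq, Fin.reduceLT,
      reduceIte, ite_true, ite_false,
      end_sub_eq, end_neg_eq_smul,
      mul_add, add_mul,
      smul_add, smul_smul, smul_mul_assoc, mul_smul_comm,
      mul_assoc, mul_one, one_mul, mul_zero, zero_mul, add_zero, zero_add, smul_zero,
      zero_smul,
      aop_adop, aop_adop', aop_swap, aop_swap', adop_swap, adop_swap',
      gop_sq, gop_sq', gop_swap, gop_swap', gop_aop, gop_aop', gop_adop, gop_adop']
  module

set_option maxHeartbeats 1600000 in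
lemma comm5 : ((2 : ℂ) • (Lop 0 1 * Sop 0 1 + Lop 0 2 * Sop 0 2 + Lop 0 3 * Sop 0 3
        + Lop 1 2 * Sop 1 2 + Lop 1 3 * Sop 1 3 + Lop 2 3 * Sop 2 3
        - (3 / 4 : ℂ) • (1 : Module.End ℂ V))) * (Jop 0 1) = (Jop 0 1) * ((2 : ℂ) • (Lop 0 1 * Sop 0 1 + Lop 0 2 * Sop 0 2 + Lop 0 3 * Sop 0 3
        + Lop 1 2 * Sop 1 2 + Lop 1 3 * Sop 1 3 + Lop 2 3 * Sop 2 3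
        - (3 / 4 : ℂ) • (1 : Module.End ℂ V))) := by
  simp only [Hop, Jop01, Jop23, Lop, Sop, Fin.sum_univ_four, Fin.isValue, Fin.reduceEq, Fin.reduceLT,
      reduceIte, ite_true, ite_false,
      end_sub_eq, end_neg_eq_smul,
      mul_add, add_mul,
      smul_add, smul_smul, smul_mul_assoc, mul_smul_comm,
      mul_assoc, mul_one, one_mul, mul_zero, zero_mul, add_zero, zero_add, smul_zero,
      zero_smul,
      aop_adop, aop_adop', aop_swap, aop_swap', adop_swap, adop_swap',
      gop_sq, gop_sq', gop_swap, gop_swap', gop_aop, gop_aop', gop_adop, gop_adop']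
  module

set_option maxHeartbeats 1600000 in
lemma comm6 : ((2 : ℂ) • (Lop 0 1 * Sop 0 1 + Lop 0 2 * Sop 0 2 + Lop 0 3 * Sop 0 3
        + Lop 1 2 * Sop 1 2 + Lop 1 3 * Sop 1 3 + Lop 2 3 * Sop 2 3
        - (3 / 4 : ℂ) • (1 : Module.End ℂ V))) * (Jop 2 3) = (Jop 2 3) * ((2 : ℂ) • (Lop 0 1 * Sop 0 1 + Lop 0 2 * Sop 0 2 + Lop 0 3 * Sop 0 3
        + Lop 1 2 * Sop 1 2 + Lop 1 3 * Sop 1 3 + Lop 2 3 * Sop 2 3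
        - (3 / 4 : ℂ) • (1 : Module.End ℂ V))) := by
  simp only [Hop, Jop01, Jop23, Lop, Sop, Fin.sum_univ_four, Fin.isValue, Fin.reduceEq, Fin.reduceLT,
      reduceIte, ite_true, ite_false,
      end_sub_eq, end_neg_eq_smul,
      mul_add, add_mul,
      smul_add, smul_smul, smul_mul_assoc, mul_smul_comm,
      mul_assoc, mul_one, one_mul, mul_zero, zero_mul, add_zero, zero_add, smul_zero,
      zero_smul,
      aop_adop, aop_adop', aop_swap, aop_swap', adop_swap, adop_swap',
      gop_sq, gop_sq', gop_swap, gop_swap', gop_aop, gop_aop', gop_adop, gop_adop']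
  module

set_option maxHeartbeats 1600000 in
lemma comm7 : (Complex.I • (gop 0 * gop 1)) * (Hop) = (Hop) * (Complex.I • (gop 0 * gop 1)) := by
  simp only [Hop, Jop01, Jop23, Lop, Sop, Fin.sum_univ_four, Fin.isValue, Fin.reduceEq, Fin.reduceLT,
      reduceIte, ite_true, ite_false,
      end_sub_eq, end_neg_eq_smul,
      mul_add, add_mul,
      smul_add, smul_smul, smul_mul_assoc, mul_smul_comm,
      mul_assoc, mul_one, one_mul, mul_zero, zero_mul, add_zero, zero_add, smul_zero,
      zero_smul,
      aop_adop, aop_adop', aop_swap, aop_swap', adop_swap, adop_swap',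
      gop_sq, gop_sq', gop_swap, gop_swap', gop_aop, gop_aop', gop_adop, gop_adop']
  module

set_option maxHeartbeats 1600000 in
lemma comm8 : (Complex.I • (gop 0 * gop 1)) * (Jop 0 1) = (Jop 0 1) * (Complex.I • (gop 0 * gop 1)) := by
  simp only [Hop, Jop01, Jop23, Lop, Sop, Fin.sum_univ_four, Fin.isValue, Fin.reduceEq, Fin.reduceLT,
      reduceIte, ite_true, ite_false,
      end_sub_eq, end_neg_eq_smul,
      mul_add, add_mul,
      smul_add, smul_smul, smul_mul_assoc, mul_smul_comm,
      mul_assoc, mul_one, one_mul, mul_zero, zero_mul, add_zero, zero_add, smul_zero,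
      zero_smul,
      aop_adop, aop_adop', aop_swap, aop_swap', adop_swap, adop_swap',
      gop_sq, gop_sq', gop_swap, gop_swap', gop_aop, gop_aop', gop_adop, gop_adop']
  module

set_option maxHeartbeats 1600000 in
lemma comm9 : (Complex.I • (gop 0 * gop 1)) * (Jop 2 3) = (Jop 2 3) * (Complex.I • (gop 0 * gop 1)) := by
  simp only [Hop, Jop01, Jop23, Lop, Sop, Fin.sum_univ_four, Fin.isValue, Fin.reduceEq, Fin.reduceLT,
      reduceIte, ite_true, ite_false,
      end_sub_eq, end_neg_eq_smul,
      mul_add, add_mul,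
      smul_add, smul_smul, smul_mul_assoc, mul_smul_comm,
      mul_assoc, mul_one, one_mul, mul_zero, zero_mul, add_zero, zero_add, smul_zero,
      zero_smul,
      aop_adop, aop_adop', aop_swap, aop_swap', adop_swap, adop_swap',
      gop_sq, gop_sq', gop_swap, gop_swap', gop_aop, gop_aop', gop_adop, gop_adop']
  module

set_option maxHeartbeats 1600000 in
lemma comm10 : (-(gop 0 * gop 1 * gop 2 * gop 3)) * (Hop) = (Hop) * (-(gop 0 * gop 1 * gop 2 * gop 3)) := by
  simp only [Hop, Jop01, Jop23, Lop, Sop, Fin.sum_univ_four, Fin.isValue, Fin.reduceEq, Fin.reduceLT,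
      reduceIte, ite_true, ite_false,
      end_sub_eq, end_neg_eq_smul,
      mul_add, add_mul,
      smul_add, smul_smul, smul_mul_assoc, mul_smul_comm,
      mul_assoc, mul_one, one_mul, mul_zero, zero_mul, add_zero, zero_add, smul_zero,
      zero_smul,
      aop_adop, aop_adop', aop_swap, aop_swap', adop_swap, adop_swap',
      gop_sq, gop_sq', gop_swap, gop_swap', gop_aop, gop_aop', gop_adop, gop_adop']
  module

set_option maxHeartbeats 1600000 in
lemma comm11 : (-(gop 0 * gop 1 * gop 2 * gop 3)) * (Jop 0 1) = (Jop 0 1) * (-(gop 0 * gop 1 * gop 2 * gop 3)) := by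
  simp only [Hop, Jop01, Jop23, Lop, Sop, Fin.sum_univ_four, Fin.isValue, Fin.reduceEq, Fin.reduceLT,
      reduceIte, ite_true, ite_false,
      end_sub_eq, end_neg_eq_smul,
      mul_add, add_mul,
      smul_add, smul_smul, smul_mul_assoc, mul_smul_comm,
      mul_assoc, mul_one, one_mul, mul_zero, zero_mul, add_zero, zero_add, smul_zero,
      zero_smul,
      aop_adop, aop_adop', aop_swap, aop_swap', adop_swap, adop_swap',
      gop_sq, gop_sq', gop_swap, gop_swap', gop_aop, gop_aop', gop_adop, gop_adop']
  module

set_option maxHeartbeats 1600000 in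
lemma comm12 : (-(gop 0 * gop 1 * gop 2 * gop 3)) * (Jop 2 3) = (Jop 2 3) * (-(gop 0 * gop 1 * gop 2 * gop 3)) := by
  simp only [Hop, Jop01, Jop23, Lop, Sop, Fin.sum_univ_four, Fin.isValue, Fin.reduceEq, Fin.reduceLT,
      reduceIte, ite_true, ite_false,
      end_sub_eq, end_neg_eq_smul,
      mul_add, add_mul,
      smul_add, smul_smul, smul_mul_assoc, mul_smul_comm,
      mul_assoc, mul_one, one_mul, mul_zero, zero_mul, add_zero, zero_add, smul_zero,
      zero_smul,
      aop_adop, aop_adop', aop_swap, aop_swap', adop_swap, adop_swap',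
      gop_sq, gop_sq', gop_swap, gop_swap', gop_aop, gop_aop', gop_adop, gop_adop']
  module


/-- The operators `𝒦₁`, `𝒦₂`, `r`, `ℛ` commute with `H`, `J₁₂` and `J₃₄`:
they lie in the commutant of `o(2) ⊕ o(2)` in the spinorial representation of `o(4)`. -/
theorem commutant_of_o2_plus_o2 :
    let K1 : Module.End ℂ V :=
      (2⁻¹ : ℂ) • (adop 0 * aop 0 + adop 1 * aop 1 - adop 2 * aop 2 - adop 3 * aop 3)
    let K2 : Module.End ℂ V :=
      (2 : ℂ) • (Lop 0 1 * Sop 0 1 + Lop 0 2 * Sop 0 2 + Lop 0 3 * Sop 0 3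
        + Lop 1 2 * Sop 1 2 + Lop 1 3 * Sop 1 3 + Lop 2 3 * Sop 2 3
        - (3 / 4 : ℂ) • (1 : Module.End ℂ V))
    let r : Module.End ℂ V := Complex.I • (gop 0 * gop 1)
    let Rc : Module.End ℂ V := -(gop 0 * gop 1 * gop 2 * gop 3)
    (K1 * Hop = Hop * K1) ∧ (K1 * Jop 0 1 = Jop 0 1 * K1) ∧ (K1 * Jop 2 3 = Jop 2 3 * K1) ∧
    (K2 * Hop = Hop * K2) ∧ (K2 * Jop 0 1 = Jop 0 1 * K2) ∧ (K2 * Jop 2 3 = Jop 2 3 * K2) ∧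
    (r * Hop = Hop * r) ∧ (r * Jop 0 1 = Jop 0 1 * r) ∧ (r * Jop 2 3 = Jop 2 3 * r) ∧
    (Rc * Hop = Hop * Rc) ∧ (Rc * Jop 0 1 = Jop 0 1 * Rc) ∧ (Rc * Jop 2 3 = Jop 2 3 * Rc) := by
  exact ⟨comm1, comm2, comm3, comm4, comm5, comm6, comm7, comm8, comm9, comm10, comm11, comm12⟩
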